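/- arXiv:1303.0626 — 2 statements merged into one kernel-verified Lean document; each statement's English description precedes it below -/
import Mathlib

section
/- Let a and b be two distinct complex numbers. There is no polynomial f ∈ ℂ[X] of degree greater than 2 such that for all z ∈ ℂ, f'(z) = a implies f(z) = a and f'(z) = b implies f(z) = b. That is, if p is a polynomial with deg p ≥ 3, then there exists z ∈ ℂ with p'(z) = a and p(z) ≠ a, or there exists z ∈ ℂ with p'(z) = b and p(z) ≠ b. -/
open Polynomial

private lemma coeff_mul_top' {f g : ℂ[X]} {m k : ℕ} (hf : f.natDegree ≤ m)
    (hg : g.natDegree ≤ k) : (f * g).coeff (m + k) = f.coeff m * g.coeff k := by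
  rw [coeff_mul, Finset.sum_eq_single (m, k)]
  · intro x hx hne
    simp only [Finset.HasAntidiagonal.mem_antidiagonal] at hx
    rcases lt_or_ge m x.1 with h | h
    · rw [coeff_eq_zero_of_natDegree_lt (lt_of_le_of_lt hf h), zero_mul]
    · have hx1 : ¬(x.1 = m ∧ x.2 = k) := fun ⟨h1, h2⟩ => hne (Prod.ext h1 h2)
      have h2 : k < x.2 := by omega
      rw [coeff_eq_zero_of_natDegree_lt (lt_of_le_of_lt hg h2), mul_zero]
  · intro h; simp [Finset.HasAntidiagonal.mem_antidiagonal] at h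

private lemma coeff_mul_next' {f g : ℂ[X]} {m k : ℕ} (hf : f.natDegree ≤ m + 1)
    (hg : g.natDegree ≤ k + 1) :
    (f * g).coeff (m + k + 1)
      = f.coeff (m + 1) * g.coeff k + f.coeff m * g.coeff (k + 1) := by
  rw [coeff_mul]
  have hne : ((m + 1, k) : ℕ × ℕ) ≠ (m, k + 1) := by
    intro h
    have := congrArg Prod.fst h
    simp at this
  have hsub : ({(m + 1, k), (m, k + 1)} : Finset (ℕ × ℕ)) ⊆ Finset.HasAntidiagonal.antidiagonal (m + k + 1) := by
    intro x hx
    simp only [Finset.mem_insert, Finset.mem_singleton] at hx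
    rcases hx with rfl | rfl <;> simp [Finset.HasAntidiagonal.mem_antidiagonal] <;> omega
  rw [← Finset.sum_subset hsub, Finset.sum_pair hne]
  intro x hx hnx
  simp only [Finset.HasAntidiagonal.mem_antidiagonal] at hx
  simp only [Finset.mem_insert, Finset.mem_singleton] at hnx
  push_neg at hnx
  obtain ⟨h1, h2⟩ := hnx
  have h1' : ¬(x.1 = m + 1 ∧ x.2 = k) := fun ⟨ha, hb⟩ => h1 (Prod.ext ha hb)
  have h2' : ¬(x.1 = m ∧ x.2 = k + 1) := fun ⟨ha, hb⟩ => h2 (Prod.ext ha hb)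
  rcases lt_or_ge (m + 1) x.1 with h | h
  · rw [coeff_eq_zero_of_natDegree_lt (lt_of_le_of_lt hf h), zero_mul]
  · have hk : k + 1 < x.2 := by omega
    rw [coeff_eq_zero_of_natDegree_lt (lt_of_le_of_lt hg hk), mul_zero]

/-- **Lemma 4.2.** Let `a ≠ b` be complex numbers. No polynomial `p` of degree
greater than `2` satisfies `p'(z) = a ⟹ p(z) = a` and `p'(z) = b ⟹ p(z) = b`
for all `z ∈ ℂ`. -/
theorem stmt_15 (a b : ℂ) (hab : a ≠ b) (p : Polynomial ℂ)
    (hdeg : 3 ≤ p.natDegree) :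
    (∃ z : ℂ, (Polynomial.derivative p).eval z = a ∧ p.eval z ≠ a) ∨
    (∃ z : ℂ, (Polynomial.derivative p).eval z = b ∧ p.eval z ≠ b) := by
  classical
  by_contra hcon
  push_neg at hcon
  obtain ⟨ha, hb⟩ := hcon
  obtain ⟨m, hm⟩ : ∃ m, p.natDegree = m + 3 := ⟨p.natDegree - 3, by omega⟩
  set P1 := Polynomial.derivative p with hP1def
  set P2 := Polynomial.derivative P1 with hP2def
  set F := p - P1 with hFdef
  set c := p.coeff (m + 3) with hcdef
  set d := p.coeff (m + 2) with hddef
  have hp0 : p ≠ 0 := by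
    intro h; rw [h, natDegree_zero] at hm; omega
  have hcne : c ≠ 0 := by
    have := leadingCoeff_ne_zero.mpr hp0
    rwa [← coeff_natDegree, hm] at this
  have hx3 : ((m : ℂ) + 3) ≠ 0 := by
    have : ((m + 3 : ℕ) : ℂ) ≠ 0 := Nat.cast_ne_zero.mpr (by omega)
    push_cast at this; exact this
  have hx2 : ((m : ℂ) + 2) ≠ 0 := by
    have : ((m + 2 : ℕ) : ℂ) ≠ 0 := Nat.cast_ne_zero.mpr (by omega)
    push_cast at this; exact this
  -- coefficient facts
  have hpc4 : p.coeff (m + 4) = 0 := coeff_eq_zero_of_natDegree_lt (by omega)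
  have hP1c3 : P1.coeff (m + 3) = 0 := by
    rw [hP1def, coeff_derivative, hpc4, zero_mul]
  have hP1c2 : P1.coeff (m + 2) = c * ((m : ℂ) + 3) := by
    rw [hP1def, coeff_derivative, ← hcdef]; (try push_cast); try ring
  have hP1c1 : P1.coeff (m + 1) = d * ((m : ℂ) + 2) := by
    rw [hP1def, coeff_derivative, ← hddef]; (try push_cast); try ring
  have hP2c1 : P2.coeff (m + 1) = c * ((m : ℂ) + 3) * ((m : ℂ) + 2) := by
    rw [hP2def, coeff_derivative, hP1c2]; (try push_cast); try ring
  have hP2c0 : P2.coeff m = d * ((m : ℂ) + 2) * ((m : ℂ) + 1) := by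
    rw [hP2def, coeff_derivative, hP1c1]
  have hFc3 : F.coeff (m + 3) = c := by
    rw [hFdef, coeff_sub, hP1c3, sub_zero]
  have hFc2 : F.coeff (m + 2) = d - c * ((m : ℂ) + 3) := by
    rw [hFdef, coeff_sub, hP1c2]
  -- degree bounds
  have hP1le : P1.natDegree ≤ m + 2 := by
    have h := natDegree_derivative_le p
    rw [← hP1def] at h; omega
  have hP2le : P2.natDegree ≤ m + 1 := by
    have h := natDegree_derivative_le P1
    rw [← hP2def] at h; omega
  have hFle : F.natDegree ≤ m + 3 := by
    refine (natDegree_sub_le p P1).trans (max_le (le_of_eq hm) (by omega))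
  have hule : ∀ t : ℂ, (P1 - C t).natDegree ≤ m + 2 := fun t =>
    (natDegree_sub_le _ _).trans (max_le hP1le (by simp [natDegree_C]))
  have hutc : ∀ t : ℂ, (P1 - C t).coeff (m + 2) = c * ((m : ℂ) + 3) := by
    intro t; rw [coeff_sub, hP1c2, coeff_C]; simp
  have hutc1 : ∀ t : ℂ, (P1 - C t).coeff (m + 1) = d * ((m : ℂ) + 2) := by
    intro t; rw [coeff_sub, hP1c1, coeff_C]; simp
  -- nonzeroness
  have hFne : F ≠ 0 := fun h => hcne (by rw [← hFc3, h, coeff_zero])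
  have hP2ne : P2 ≠ 0 := by
    intro h
    rw [h, coeff_zero] at hP2c1
    exact (mul_ne_zero (mul_ne_zero hcne hx3) hx2) hP2c1.symm
  have hutne : ∀ t : ℂ, P1 - C t ≠ 0 := by
    intro t h
    have := hutc t
    rw [h, coeff_zero] at this
    exact (mul_ne_zero hcne hx3) this.symm
  -- divisibility
  have hdvd : ∀ t : ℂ, (∀ z : ℂ, P1.eval z = t → p.eval z = t) → (P1 - C t) ∣ F * P2 := by
    intro t ht
    refine (IsAlgClosed.splits _).dvd_of_roots_le_roots (hutne t) ?_
    rw [Multiset.le_iff_count]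
    intro w
    rw [count_roots, count_roots, rootMultiplicity_mul (mul_ne_zero hFne hP2ne)]
    by_cases hw : IsRoot (P1 - C t) w
    · have hw' : P1.eval w = t := by
        have h := hw
        simp only [IsRoot, eval_sub, eval_C, sub_eq_zero] at h
        exact h
      have hf1 : 0 < rootMultiplicity w F := by
        refine (rootMultiplicity_pos hFne).mpr ?_
        simp [hFdef, IsRoot, eval_sub, ht w hw', hw']
      have hf2 : rootMultiplicity w (P1 - C t) - 1 ≤ rootMultiplicity w P2 := by
        have h := rootMultiplicity_sub_one_le_derivative_rootMultiplicity (P1 - C t) w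
        rwa [derivative_sub, derivative_C, sub_zero, ← hP2def] at h
      omega
    · rw [rootMultiplicity_eq_zero hw]; omega
  have hba : b - a ≠ 0 := sub_ne_zero.mpr (Ne.symm hab)
  have hcop : IsCoprime (P1 - C a) (P1 - C b) := by
    refine ⟨C (b - a)⁻¹, -C (b - a)⁻¹, ?_⟩
    have h1 : (C ((b - a)⁻¹) : ℂ[X]) * (C b - C a) = 1 := by
      rw [← C_sub, ← C_mul, inv_mul_cancel₀ hba, C_1]
    linear_combination h1
  obtain ⟨q, hq⟩ := hcop.mul_dvd (hdvd a ha) (hdvd b hb)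
  -- degree bookkeeping
  have hqne : q ≠ 0 := by
    intro h
    rw [h, mul_zero] at hq
    exact (mul_ne_zero hFne hP2ne) hq
  have hFdeg : F.natDegree = m + 3 :=
    le_antisymm hFle (le_natDegree_of_ne_zero (by rw [hFc3]; exact hcne))
  have hP2deg : P2.natDegree = m + 1 :=
    le_antisymm hP2le (le_natDegree_of_ne_zero
      (by rw [hP2c1]; exact mul_ne_zero (mul_ne_zero hcne hx3) hx2))
  have hudeg : ∀ t : ℂ, (P1 - C t).natDegree = m + 2 := fun t =>
    le_antisymm (hule t) (le_natDegree_of_ne_zero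
      (by rw [hutc t]; exact mul_ne_zero hcne hx3))
  have hqdeg : q.natDegree = 0 := by
    have h := congrArg natDegree hq
    rw [natDegree_mul hFne hP2ne, natDegree_mul (mul_ne_zero (hutne a) (hutne b)) hqne,
      natDegree_mul (hutne a) (hutne b), hFdeg, hP2deg, hudeg a, hudeg b] at h
    omega
  obtain ⟨k, hk⟩ : ∃ k, q = C k := ⟨q.coeff 0, eq_C_of_natDegree_eq_zero hqdeg⟩
  rw [hk] at hq
  -- top coefficient equation
  have e1 : c * (c * ((m : ℂ) + 3) * ((m : ℂ) + 2))
      = c * ((m : ℂ) + 3) * (c * ((m : ℂ) + 3)) * k := by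
    have h := congrArg (fun r : ℂ[X] => r.coeff ((m + 3) + (m + 1))) hq
    rw [coeff_mul_top' hFle hP2le, hFc3, hP2c1, coeff_mul_C,
      show (m + 3) + (m + 1) = (m + 2) + (m + 2) by omega,
      coeff_mul_top' (hule a) (hule b), hutc a, hutc b] at h
    exact h
  -- second coefficient equation
  have e2 : c * (d * ((m : ℂ) + 2) * ((m : ℂ) + 1))
      + (d - c * ((m : ℂ) + 3)) * (c * ((m : ℂ) + 3) * ((m : ℂ) + 2))
      = (c * ((m : ℂ) + 3) * (d * ((m : ℂ) + 2))
        + d * ((m : ℂ) + 2) * (c * ((m : ℂ) + 3))) * k := by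
    have h := congrArg (fun r : ℂ[X] => r.coeff ((m + 2) + m + 1)) hq
    rw [coeff_mul_next' (show F.natDegree ≤ (m + 2) + 1 by omega)
        (show P2.natDegree ≤ m + 1 from hP2le),
      show (m + 2) + 1 = m + 3 by omega, hFc3, hP2c0, hFc2, hP2c1, coeff_mul_C,
      show (m + 2) + m + 1 = (m + 1) + (m + 1) + 1 by omega,
      coeff_mul_next' (show (P1 - C a).natDegree ≤ (m + 1) + 1 by
        have := hule a; omega)
        (show (P1 - C b).natDegree ≤ (m + 1) + 1 by have := hule b; omega),
      show (m + 1) + 1 = m + 2 by omega, hutc a, hutc b, hutc1 a, hutc1 b] at h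
    exact h
  -- final contradiction
  have h1 : ((m : ℂ) + 2) = ((m : ℂ) + 3) * k := by
    refine mul_left_cancel₀ (show c * c * ((m : ℂ) + 3) ≠ 0 from
      mul_ne_zero (mul_ne_zero hcne hcne) hx3) ?_
    linear_combination e1
  have h2 : c * c * ((m : ℂ) + 2) * ((m : ℂ) + 3) * ((m : ℂ) + 3) = 0 := by
    linear_combination -e2 + 2 * c * d * ((m : ℂ) + 2) * h1
  simp only [mul_eq_zero] at h2
  rcases h2 with ((((h | h) | h) | h) | h)
  · exact hcne h
  · exact hcne h
  · exact hx2 h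
  · exact hx3 h
  · exact hx3 h
end

section
/- Let c be a nonzero complex number, β a nonzero complex number, and define the entire function f(z) = (4c³/(27β²))·exp((2/3)z) + β·exp(−(1/3)z). Then there exists z₀ ∈ ℂ with f'(z₀) = c and f(z₀) = (√6 − 1/2)·c ≠ c; in particular f and f' do not share the value c IM. -/
/-- **Proof of Theorem 2.2 (key computation).** For nonzero `c, β ∈ ℂ`, the
entire function `f(z) = (4c³/(27β²))·exp((2/3)z) + β·exp(−(1/3)z)` has a point
`z₀` with `f'(z₀) = c` but `f(z₀) = (√6 − 1/2)·c ≠ c`; in particular `f` and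
`f'` do not share the value `c` IM. -/
theorem stmt_17 (c β : ℂ) (hc : c ≠ 0) (hβ : β ≠ 0)
    (f : ℂ → ℂ)
    (hf : ∀ z : ℂ, f z = 4 * c ^ 3 / (27 * β ^ 2) * Complex.exp (2 / 3 * z)
      + β * Complex.exp (-(1 / 3) * z)) :
    (∃ z₀ : ℂ, deriv f z₀ = c ∧
      f z₀ = ((Real.sqrt 6 : ℂ) - 1 / 2) * c ∧ f z₀ ≠ c) ∧
    ¬ (∀ z : ℂ, f z = c ↔ deriv f z = c) := by
  have hfun : f = fun z => 4 * c ^ 3 / (27 * β ^ 2) * Complex.exp (2 / 3 * z)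
      + β * Complex.exp (-(1 / 3) * z) := funext hf
  subst hfun
  set s : ℂ := (Real.sqrt 6 : ℂ) with hs
  have hs6 : s ^ 2 = 6 := by
    rw [hs]
    norm_cast
    rw [Real.sq_sqrt] <;> norm_num
  have hs2 : s ≠ 2 := by
    intro h; rw [h] at hs6; norm_num at hs6
  have hs32 : s ≠ 3 / 2 := by
    intro h; rw [h] at hs6; norm_num at hs6
  have hy0 : (2 * s - 4) ≠ 0 := by
    intro h
    apply hs2
    have : 2 * s = 4 := by linear_combination h
    linear_combination this / 2
  set y : ℂ := (2 * s - 4) * c / 3 with hydef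
  have hy : y ≠ 0 := by
    apply div_ne_zero (mul_ne_zero hy0 hc)
    norm_num
  set w : ℂ := y / β with hwdef
  have hw : w ≠ 0 := div_ne_zero hy hβ
  set z₀ : ℂ := -3 * Complex.log w with hz
  have he1 : Complex.exp (-(1 / 3) * z₀) = w := by
    have : -(1 / 3 : ℂ) * z₀ = Complex.log w := by rw [hz]; ring
    rw [this, Complex.exp_log hw]
  have he2 : Complex.exp (2 / 3 * z₀) = (w ^ 2)⁻¹ := by
    have h1 : (2 / 3 : ℂ) * z₀ = -((2 : ℕ) * Complex.log w) := by
      rw [hz]; push_cast; ring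
    rw [h1, Complex.exp_neg, Complex.exp_nat_mul, Complex.exp_log hw]
  have h40 : (40 : ℂ) - 16 * s ≠ 0 := by
    intro h
    have : s = 5 / 2 := by linear_combination -h / 16
    rw [this] at hs6; norm_num at hs6
  have hw2 : (w ^ 2)⁻¹ = 9 * β ^ 2 / ((40 - 16 * s) * c ^ 2) := by
    have : w ^ 2 = (40 - 16 * s) * c ^ 2 / (9 * β ^ 2) := by
      rw [hwdef, hydef]
      field_simp
      ring_nf
      linear_combination 36 * hs6
    rw [this, inv_div]
  have hd : ∀ z : ℂ, HasDerivAt (fun z => 4 * c ^ 3 / (27 * β ^ 2) * Complex.exp (2 / 3 * z)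
      + β * Complex.exp (-(1 / 3) * z))
      (4 * c ^ 3 / (27 * β ^ 2) * (Complex.exp (2 / 3 * z) * (2 / 3))
        + β * (Complex.exp (-(1 / 3) * z) * (-(1 / 3)))) z := by
    intro z
    have h1 : HasDerivAt (fun z : ℂ => 2 / 3 * z) (2 / 3) z := by
      simpa using (hasDerivAt_id z).const_mul (2 / 3 : ℂ)
    have h2 : HasDerivAt (fun z : ℂ => -(1 / 3) * z) (-(1 / 3)) z := by
      simpa using (hasDerivAt_id z).const_mul (-(1 / 3) : ℂ)
    exact (h1.cexp.const_mul _).add (h2.cexp.const_mul _)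
  have hderiv : deriv (fun z => 4 * c ^ 3 / (27 * β ^ 2) * Complex.exp (2 / 3 * z)
      + β * Complex.exp (-(1 / 3) * z)) z₀ = c := by
    rw [(hd z₀).deriv, he1, he2, hw2, hwdef, hydef]
    have hD : (27 * β ^ 2 * ((40 - 16 * s) * c ^ 2 * 3) * (3 * β * 3) : ℂ) ≠ 0 := by
      refine mul_ne_zero (mul_ne_zero (mul_ne_zero (by norm_num) (pow_ne_zero _ hβ)) ?_) ?_
      · exact mul_ne_zero (mul_ne_zero h40 (pow_ne_zero _ hc)) (by norm_num)
      · exact mul_ne_zero (mul_ne_zero (by norm_num) hβ) (by norm_num)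
    field_simp [h40, hc, hβ]
    linear_combination 864 * hs6
  have hval : (fun z => 4 * c ^ 3 / (27 * β ^ 2) * Complex.exp (2 / 3 * z)
      + β * Complex.exp (-(1 / 3) * z)) z₀ = (s - 1 / 2) * c := by
    simp only
    rw [he1, he2, hw2, hwdef, hydef]
    field_simp [h40, hc, hβ]
    linear_combination 864 * hs6
  have hne : (s - 1 / 2) * c ≠ c := by
    intro h
    apply hs32
    have : (s - 3 / 2) * c = 0 := by linear_combination h
    rcases mul_eq_zero.mp this with h' | h'
    · linear_combination h'
    · exact absurd h' hc
  refine ⟨⟨z₀, hderiv, hval, by rw [hval]; exact hne⟩, fun h => ?_⟩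
  have := (h z₀).mpr hderiv
  rw [hval] at this
  exact hne this
end
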